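/- (Clarkson inequality, part 1) Let 1 < p < ∞, let p′ = p/(p−1) be the conjugate index, set r = min(p, p′) and r′ = r/(r−1). Then for all x, y ∈ ℓ_p: 2(‖x‖_p^{r′} + ‖y‖_p^{r′}) ≤ ‖x+y‖_p^{r′} + ‖x−y‖_p^{r′} ≤ 2^{r′−1}(‖x‖_p^{r′} + ‖y‖_p^{r′}). -/

import Mathlib

open scoped ENNReal NNReal
open Real

/-! ### Scalar inequality for `2 ≤ p` -/

lemma nnA {p : ℝ} (hp : 2 ≤ p) (u v A B : ℝ≥0) (h : u ^ (2:ℝ) + v ^ (2:ℝ) = 2 * (A ^ (2:ℝ) + B ^ (2:ℝ))) :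
    u ^ p + v ^ p ≤ 2 ^ (p - 1) * (A ^ p + B ^ p) := by
  have h2 : (1:ℝ) ≤ p / 2 := by linarith [hp]
  have e : ∀ w : ℝ≥0, w ^ p = (w ^ (2:ℝ)) ^ (p/2) := by
    intro w; rw [← NNReal.rpow_mul]; congr 1; ring
  rw [e u, e v, e A, e B]
  calc (u ^ (2:ℝ)) ^ (p/2) + (v ^ (2:ℝ)) ^ (p/2)
      ≤ (u ^ (2:ℝ) + v ^ (2:ℝ)) ^ (p/2) := NNReal.add_rpow_le_rpow_add _ _ h2
    _ = (2:ℝ≥0) ^ (p/2) * (A ^ (2:ℝ) + B ^ (2:ℝ)) ^ (p/2) := by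
        rw [h, NNReal.mul_rpow]
    _ ≤ (2:ℝ≥0) ^ (p/2) * ((2:ℝ≥0) ^ (p/2 - 1) * ((A ^ (2:ℝ)) ^ (p/2) + (B ^ (2:ℝ)) ^ (p/2))) := by
        gcongr
        exact NNReal.rpow_add_le_mul_rpow_add_rpow _ _ h2
    _ = 2 ^ (p - 1) * ((A ^ (2:ℝ)) ^ (p/2) + (B ^ (2:ℝ)) ^ (p/2)) := by
        rw [← mul_assoc, ← NNReal.rpow_add (by norm_num)]
        ring_nf

lemma scalarA {p : ℝ} (hp : 2 ≤ p) (a b : ℝ) :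
    |a + b| ^ p + |a - b| ^ p ≤ 2 ^ (p - 1) * (|a| ^ p + |b| ^ p) := by
  have key := nnA hp ‖a+b‖₊ ‖a-b‖₊ ‖a‖₊ ‖b‖₊ ?_
  · have := NNReal.coe_le_coe.2 key
    push_cast [NNReal.coe_rpow, coe_nnnorm, Real.norm_eq_abs] at this
    convert this using 3 <;> norm_num
  · have : ∀ c : ℝ, ‖c‖₊ ^ (2:ℝ) = ‖c‖₊ ^ (2:ℕ) := fun c => by
      rw [← NNReal.rpow_natCast]; norm_num
    apply NNReal.coe_injective
    push_cast [this, coe_nnnorm, Real.norm_eq_abs, sq_abs]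
    ring

/-! ### Reverse Minkowski inequality for `0 < s < 1` -/

lemma add_rpow_le' {a b s : ℝ} (ha : 0 ≤ a) (hb : 0 ≤ b) (hs : 0 ≤ s) (hs1 : s ≤ 1) :
    (a + b) ^ s ≤ a ^ s + b ^ s := by
  have h := NNReal.rpow_add_le_add_rpow a.toNNReal b.toNNReal hs hs1
  have := NNReal.coe_le_coe.2 h
  push_cast [NNReal.coe_rpow] at this
  rwa [Real.coe_toNNReal a ha, Real.coe_toNNReal b hb] at this

lemma rev_mink_finset {s : ℝ} (hs : 0 < s) (hs1 : s < 1) (S : Finset ℕ) {f g : ℕ → ℝ}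
    (hf0 : ∀ i, 0 ≤ f i) (hg0 : ∀ i, 0 ≤ g i) :
    (∑ i ∈ S, f i ^ s) ^ (1 / s) + (∑ i ∈ S, g i ^ s) ^ (1 / s)
      ≤ (∑ i ∈ S, (f i + g i) ^ s) ^ (1 / s) := by
  classical
  set S' := S.filter (fun i => 0 < f i + g i) with hS'
  have hmem : ∀ i ∈ S', 0 < f i + g i := fun i hi => (Finset.mem_filter.1 hi).2
  -- replace sums over S by sums over S'
  have hzero : ∀ i ∈ S, i ∉ S' → f i = 0 ∧ g i = 0 := by
    intro i hi hni
    have : ¬ 0 < f i + g i := fun h => hni (Finset.mem_filter.2 ⟨hi, h⟩)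
    constructor <;> nlinarith [hf0 i, hg0 i]
  have ef : ∑ i ∈ S, f i ^ s = ∑ i ∈ S', f i ^ s := by
    refine (Finset.sum_subset (Finset.filter_subset _ _) ?_).symm
    intro i hi hni; rw [(hzero i hi hni).1]; exact Real.zero_rpow hs.ne'
  have eg : ∑ i ∈ S, g i ^ s = ∑ i ∈ S', g i ^ s := by
    refine (Finset.sum_subset (Finset.filter_subset _ _) ?_).symm
    intro i hi hni; rw [(hzero i hi hni).2]; exact Real.zero_rpow hs.ne'
  have efg : ∑ i ∈ S, (f i + g i) ^ s = ∑ i ∈ S', (f i + g i) ^ s := by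
    refine (Finset.sum_subset (Finset.filter_subset _ _) ?_).symm
    intro i hi hni; rw [(hzero i hi hni).1, (hzero i hi hni).2, add_zero]
    exact Real.zero_rpow hs.ne'
  rw [ef, eg, efg]
  set T := ∑ i ∈ S', (f i + g i) ^ s with hT
  have hTnn : (0:ℝ) ≤ T := Finset.sum_nonneg fun i _ =>
    Real.rpow_nonneg (add_nonneg (hf0 i) (hg0 i)) s
  rcases eq_or_lt_of_le hTnn with hT0 | hTpos
  · -- T = 0 : then S' has no elements with positive f i + g i, so S' = ∅
    have hS'empty : ∀ i ∈ S', False := by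
      intro i hi
      have h1 : (0:ℝ) < (f i + g i) ^ s := Real.rpow_pos_of_pos (hmem i hi) s
      have h2 : (f i + g i) ^ s ≤ T := Finset.single_le_sum
        (f := fun i => (f i + g i) ^ s)
        (fun j _ => Real.rpow_nonneg (add_nonneg (hf0 j) (hg0 j)) s) hi
      rw [← hT0] at h2
      linarith
    have hempty : S' = ∅ := Finset.eq_empty_of_forall_notMem fun i hi => hS'empty i hi
    rw [hempty, ← hT0]
    simp [Real.zero_rpow (show s⁻¹ ≠ 0 from inv_ne_zero hs.ne'), one_div]
  · -- main case
    have hsne : s ≠ 0 := hs.ne'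
    have h1s : (0:ℝ) < 1 - s := by linarith
    have hpq : (1/s).HolderConjugate (1/(1-s)) := by
      rw [Real.holderConjugate_iff]
      constructor
      · rw [lt_div_iff₀ hs]; linarith
      · simp only [one_div, inv_inv]; ring
    -- generic Hölder step
    have key : ∀ h : ℕ → ℝ, (∀ i, 0 ≤ h i) →
        ∑ i ∈ S', h i ^ s ≤ (∑ i ∈ S', h i * (f i + g i) ^ (s - 1)) ^ s * T ^ (1 - s) := by
      intro h h0
      have := Real.inner_le_Lp_mul_Lq_of_nonneg S' hpq
        (f := fun i => (h i * (f i + g i) ^ (s - 1)) ^ s)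
        (g := fun i => (f i + g i) ^ (s * (1 - s)))
        (fun i _ => Real.rpow_nonneg (mul_nonneg (h0 i)
          (Real.rpow_nonneg (add_nonneg (hf0 i) (hg0 i)) _)) s)
        (fun i _ => Real.rpow_nonneg (add_nonneg (hf0 i) (hg0 i)) _)
      have e1 : ∀ i ∈ S', (h i * (f i + g i) ^ (s - 1)) ^ s * (f i + g i) ^ (s * (1 - s))
          = h i ^ s := by
        intro i hi
        rw [Real.mul_rpow (h0 i) (Real.rpow_nonneg (add_nonneg (hf0 i) (hg0 i)) _),
          ← Real.rpow_mul (le_of_lt (hmem i hi)), mul_assoc, ← Real.rpow_add (hmem i hi),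
          show (s-1)*s + s*(1-s) = 0 by ring, Real.rpow_zero, mul_one]
      have e2 : ∀ i ∈ S', ((h i * (f i + g i) ^ (s - 1)) ^ s) ^ (1/s)
          = h i * (f i + g i) ^ (s - 1) := by
        intro i hi
        rw [← Real.rpow_mul (mul_nonneg (h0 i)
          (Real.rpow_nonneg (add_nonneg (hf0 i) (hg0 i)) _)), mul_one_div_cancel hsne,
          Real.rpow_one]
      have e3 : ∀ i ∈ S', ((f i + g i) ^ (s * (1 - s))) ^ (1/(1-s)) = (f i + g i) ^ s := by
        intro i hi
        rw [← Real.rpow_mul (le_of_lt (hmem i hi))]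
        congr 1; field_simp
      calc ∑ i ∈ S', h i ^ s
          = ∑ i ∈ S', (h i * (f i + g i) ^ (s - 1)) ^ s * (f i + g i) ^ (s * (1 - s)) :=
            (Finset.sum_congr rfl e1).symm
        _ ≤ (∑ i ∈ S', ((h i * (f i + g i) ^ (s - 1)) ^ s) ^ (1/s)) ^ ((1:ℝ)/(1/s))
            * (∑ i ∈ S', ((f i + g i) ^ (s * (1-s))) ^ (1/(1-s))) ^ ((1:ℝ)/(1/(1-s))) := by
            simpa using this
        _ = (∑ i ∈ S', h i * (f i + g i) ^ (s - 1)) ^ s * T ^ (1 - s) := by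
            rw [Finset.sum_congr rfl e2, Finset.sum_congr rfl e3,
              show (1:ℝ)/(1/s) = s by field_simp, show (1:ℝ)/(1/(1-s)) = 1-s by field_simp]
    -- raise to power 1/s
    have key' : ∀ h : ℕ → ℝ, (∀ i, 0 ≤ h i) →
        (∑ i ∈ S', h i ^ s) ^ (1/s)
          ≤ (∑ i ∈ S', h i * (f i + g i) ^ (s - 1)) * T ^ ((1 - s)/s) := by
      intro h h0
      have hw : 0 ≤ ∑ i ∈ S', h i * (f i + g i) ^ (s - 1) :=
        Finset.sum_nonneg fun i hi => mul_nonneg (h0 i)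
          (Real.rpow_nonneg (add_nonneg (hf0 i) (hg0 i)) _)
      calc (∑ i ∈ S', h i ^ s) ^ (1/s)
          ≤ ((∑ i ∈ S', h i * (f i + g i) ^ (s - 1)) ^ s * T ^ (1 - s)) ^ (1/s) := by
            apply Real.rpow_le_rpow (Finset.sum_nonneg fun i _ => Real.rpow_nonneg (h0 i) s)
              (key h h0) (by positivity)
        _ = (∑ i ∈ S', h i * (f i + g i) ^ (s - 1)) * T ^ ((1 - s)/s) := by
            rw [Real.mul_rpow (Real.rpow_nonneg hw s) (Real.rpow_nonneg hTpos.le _),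
              ← Real.rpow_mul hw, ← Real.rpow_mul hTpos.le,
              mul_one_div_cancel hsne, Real.rpow_one]
            ring_nf
    have hf' := key' f hf0
    have hg' := key' g hg0
    have hsum : (∑ i ∈ S', f i * (f i + g i) ^ (s - 1))
        + (∑ i ∈ S', g i * (f i + g i) ^ (s - 1)) = T := by
      rw [← Finset.sum_add_distrib, hT]
      refine Finset.sum_congr rfl fun i hi => ?_
      rw [← add_mul]
      nth_rewrite 1 [← Real.rpow_one (f i + g i)]
      rw [← Real.rpow_add (hmem i hi)]
      norm_num
    calc (∑ i ∈ S', f i ^ s) ^ (1/s) + (∑ i ∈ S', g i ^ s) ^ (1/s)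
        ≤ ((∑ i ∈ S', f i * (f i + g i) ^ (s - 1))
            + (∑ i ∈ S', g i * (f i + g i) ^ (s - 1))) * T ^ ((1-s)/s) := by
          rw [add_mul]; exact add_le_add hf' hg'
      _ = T * T ^ ((1-s)/s) := by rw [hsum]
      _ = T ^ (1/s) := by
          nth_rewrite 1 [← Real.rpow_one T]
          rw [← Real.rpow_add hTpos]
          congr 1; field_simp; ring

lemma rev_minkowski {s : ℝ} (hs : 0 < s) (hs1 : s < 1) {f g : ℕ → ℝ}
    (hf0 : ∀ i, 0 ≤ f i) (hg0 : ∀ i, 0 ≤ g i)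
    (hf : Summable fun i => f i ^ s) (hg : Summable fun i => g i ^ s) :
    (∑' i, f i ^ s) ^ (1 / s) + (∑' i, g i ^ s) ^ (1 / s)
      ≤ (∑' i, (f i + g i) ^ s) ^ (1 / s) := by
  have hfg : Summable fun i => (f i + g i) ^ s := by
    refine Summable.of_nonneg_of_le (fun i => Real.rpow_nonneg (add_nonneg (hf0 i) (hg0 i)) s)
      (fun i => add_rpow_le' (hf0 i) (hg0 i) hs.le hs1.le) (hf.add hg)
  have hcont : ∀ c : ℝ, ContinuousAt (fun x : ℝ => x ^ (1/s)) c := by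
    intro c
    exact Real.continuousAt_rpow_const c (1/s) (Or.inr (by positivity))
  have t1 : Filter.Tendsto (fun S : Finset ℕ => (∑ i ∈ S, f i ^ s) ^ (1/s)
      + (∑ i ∈ S, g i ^ s) ^ (1/s)) Filter.atTop
      (nhds ((∑' i, f i ^ s) ^ (1/s) + (∑' i, g i ^ s) ^ (1/s))) := by
    exact Filter.Tendsto.add
      (((hcont _).tendsto).comp hf.hasSum)
      (((hcont _).tendsto).comp hg.hasSum)
  refine le_of_tendsto t1 (Filter.Eventually.of_forall fun S => ?_)
  calc (∑ i ∈ S, f i ^ s) ^ (1/s) + (∑ i ∈ S, g i ^ s) ^ (1/s)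
      ≤ (∑ i ∈ S, (f i + g i) ^ s) ^ (1/s) := rev_mink_finset hs hs1 S hf0 hg0
    _ ≤ (∑' i, (f i + g i) ^ s) ^ (1/s) := by
        apply Real.rpow_le_rpow (Finset.sum_nonneg fun i _ =>
            Real.rpow_nonneg (add_nonneg (hf0 i) (hg0 i)) s)
          (Summable.sum_le_tsum S (fun i _ => Real.rpow_nonneg (add_nonneg (hf0 i) (hg0 i)) s) hfg)
          (by positivity)

/-! ### Two-point inequality (Hausdorff-Young / Clarkson) for `1 < p ≤ 2` -/

noncomputable section

lemma norm_cpow_real {t : ℝ} (ht : 0 < t) (w : ℂ) : ‖(t:ℂ) ^ w‖ = t ^ w.re := by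
  rw [Complex.norm_cpow_eq_rpow_re_of_pos ht]

lemma rpow_interval_bound {t r r1 r2 : ℝ} (ht : 0 < t) (h1 : r1 ≤ r) (h2 : r ≤ r2) :
    t ^ r ≤ max (t ^ r1) (t ^ r2) := by
  rcases le_total 1 t with h | h
  · exact le_max_of_le_right (Real.rpow_le_rpow_of_exponent_le h h2)
  · exact le_max_of_le_left (Real.rpow_le_rpow_of_exponent_ge ht h h1)

lemma cs_two {a b c d : ℝ} (ha : 0 ≤ a) (hb : 0 ≤ b) (hc : 0 ≤ c) (hd : 0 ≤ d) :
    a * c + b * d ≤ Real.sqrt (a^2 + b^2) * Real.sqrt (c^2 + d^2) := by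
  have h0 : 0 ≤ a * c + b * d := by positivity
  have key : (a*c + b*d)^2 ≤ (a^2+b^2) * (c^2+d^2) := by nlinarith [sq_nonneg (a*d - b*c)]
  calc a * c + b * d = Real.sqrt ((a*c+b*d)^2) := (Real.sqrt_sq h0).symm
    _ ≤ Real.sqrt ((a^2+b^2) * (c^2+d^2)) := Real.sqrt_le_sqrt key
    _ = Real.sqrt (a^2+b^2) * Real.sqrt (c^2+d^2) := Real.sqrt_mul (by positivity) _

set_option maxHeartbeats 2000000 in
lemma scalarB_core {p q : ℝ} (hp : 1 < p) (hp2 : p ≤ 2) (hq : q = p / (p - 1))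
    {a b : ℝ} (ha : a ≠ 0) (hb : b ≠ 0) (hu : a + b ≠ 0) (hv : a - b ≠ 0)
    (hnorm : |a| ^ p + |b| ^ p = 1) :
    |a + b| ^ q + |a - b| ^ q ≤ 2 := by
  have hp0 : (0:ℝ) < p := by linarith
  have hp1 : (0:ℝ) < p - 1 := by linarith
  have hq2 : 2 ≤ q := by rw [hq, le_div_iff₀ hp1]; nlinarith
  have hq0 : (0:ℝ) < q := by linarith
  have hpq : 1/p + 1/q = 1 := by rw [hq]; field_simp; ring
  have hqp : q / p = q - 1 := by rw [hq]; field_simp; ring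
  set A := |a| with hA
  set B := |b| with hBd
  set U := |a + b| with hUd
  set V := |a - b| with hVd
  have hApos : 0 < A := abs_pos.mpr ha
  have hBpos : 0 < B := abs_pos.mpr hb
  have hUpos : 0 < U := abs_pos.mpr hu
  have hVpos : 0 < V := abs_pos.mpr hv
  set S := (U ^ q + V ^ q) / 2 with hSdef
  have hSpos : 0 < S := by
    rw [hSdef]
    have := Real.rpow_pos_of_pos hUpos q
    have := Real.rpow_pos_of_pos hVpos q
    linarith
  suffices hS1 : S ≤ 1 by
    rw [hSdef] at hS1
    linarith
  -- complex sign factors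
  set sa : ℂ := ((a / A : ℝ) : ℂ) with hsad
  set sb : ℂ := ((b / B : ℝ) : ℂ) with hsbd
  set su : ℂ := (((a+b) / U : ℝ) : ℂ) with hsud
  set sv : ℂ := (((a-b) / V : ℝ) : ℂ) with hsvd
  have hsa1 : ‖sa‖ = 1 := by
    rw [hsad, Complex.norm_real, Real.norm_eq_abs, abs_div, hA, abs_abs, div_self hApos.ne']
  have hsb1 : ‖sb‖ = 1 := by
    rw [hsbd, Complex.norm_real, Real.norm_eq_abs, abs_div, hBd, abs_abs, div_self hBpos.ne']
  have hsu1 : ‖su‖ = 1 := by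
    rw [hsud, Complex.norm_real, Real.norm_eq_abs, abs_div, hUd, abs_abs, div_self hUpos.ne']
  have hsv1 : ‖sv‖ = 1 := by
    rw [hsvd, Complex.norm_real, Real.norm_eq_abs, abs_div, hVd, abs_abs, div_self hVpos.ne']
  -- exponent functions
  set e1 : ℂ → ℂ := fun z => (p:ℂ) - ((p/2 : ℝ):ℂ) * z with he1
  set e2 : ℂ → ℂ := fun z => (q:ℂ) - ((q/2 : ℝ):ℂ) * z with he2
  set e3 : ℂ → ℂ := fun z => (((1:ℝ)/2 : ℝ):ℂ) * z - 1 with he3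
  have he1re : ∀ z : ℂ, (e1 z).re = p - (p/2) * z.re := by
    intro z; simp [he1, Complex.sub_re, Complex.ofReal_re, Complex.re_ofReal_mul]
  have he2re : ∀ z : ℂ, (e2 z).re = q - (q/2) * z.re := by
    intro z; simp [he2, Complex.sub_re, Complex.ofReal_re, Complex.re_ofReal_mul]
  have he3re : ∀ z : ℂ, (e3 z).re = (1/2) * z.re - 1 := by
    intro z; simp [he3, Complex.sub_re, Complex.ofReal_re, Complex.re_ofReal_mul]
  -- the function
  set F : ℂ → ℂ := fun z =>
    (2:ℂ)⁻¹ * (S:ℂ) ^ (e3 z) *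
      (su * (U:ℂ) ^ (e2 z) * (sa * (A:ℂ) ^ (e1 z) + sb * (B:ℂ) ^ (e1 z)) +
       sv * (V:ℂ) ^ (e2 z) * (sa * (A:ℂ) ^ (e1 z) - sb * (B:ℂ) ^ (e1 z))) with hF
  -- differentiability
  have hdiff : Differentiable ℂ F := by
    have d1 : Differentiable ℂ e1 := by
      rw [he1]; exact (differentiable_const _).sub (differentiable_id.const_mul _)
    have d2 : Differentiable ℂ e2 := by
      rw [he2]; exact (differentiable_const _).sub (differentiable_id.const_mul _)
    have d3 : Differentiable ℂ e3 := by
      rw [he3]; exact (differentiable_id.const_mul _).sub (differentiable_const _)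
    have cA : Differentiable ℂ (fun z => (A:ℂ) ^ (e1 z)) :=
      d1.const_cpow (Or.inl (by exact_mod_cast hApos.ne'))
    have cB : Differentiable ℂ (fun z => (B:ℂ) ^ (e1 z)) :=
      d1.const_cpow (Or.inl (by exact_mod_cast hBpos.ne'))
    have cU : Differentiable ℂ (fun z => (U:ℂ) ^ (e2 z)) :=
      d2.const_cpow (Or.inl (by exact_mod_cast hUpos.ne'))
    have cV : Differentiable ℂ (fun z => (V:ℂ) ^ (e2 z)) :=
      d2.const_cpow (Or.inl (by exact_mod_cast hVpos.ne'))
    have cS : Differentiable ℂ (fun z => (S:ℂ) ^ (e3 z)) :=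
      d3.const_cpow (Or.inl (by exact_mod_cast hSpos.ne'))
    rw [hF]
    exact ((differentiable_const _).mul cS).mul
      ((((cU.const_mul su).mul ((cA.const_mul sa).add (cB.const_mul sb)))).add
        (((cV.const_mul sv).mul ((cA.const_mul sa).sub (cB.const_mul sb)))))
  have hd : DiffContOnCl ℂ F (Complex.HadamardThreeLines.verticalStrip 0 1) :=
    hdiff.diffContOnCl
  -- generic triangle-inequality bound
  have tri : ∀ z : ℂ, ‖F z‖ ≤ 2⁻¹ * S ^ (e3 z).re *
      ((U ^ (e2 z).re + V ^ (e2 z).re) * (A ^ (e1 z).re + B ^ (e1 z).re)) := by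
    intro z
    have hP : ‖sa * (A:ℂ) ^ (e1 z) + sb * (B:ℂ) ^ (e1 z)‖ ≤ A ^ (e1 z).re + B ^ (e1 z).re := by
      refine (norm_add_le _ _).trans ?_
      rw [norm_mul, norm_mul, hsa1, hsb1, one_mul, one_mul,
        norm_cpow_real hApos, norm_cpow_real hBpos]
    have hM : ‖sa * (A:ℂ) ^ (e1 z) - sb * (B:ℂ) ^ (e1 z)‖ ≤ A ^ (e1 z).re + B ^ (e1 z).re := by
      refine (norm_sub_le _ _).trans ?_
      rw [norm_mul, norm_mul, hsa1, hsb1, one_mul, one_mul,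
        norm_cpow_real hApos, norm_cpow_real hBpos]
    have hFn : ‖F z‖ = 2⁻¹ * S ^ (e3 z).re *
        ‖su * (U:ℂ) ^ (e2 z) * (sa * (A:ℂ) ^ (e1 z) + sb * (B:ℂ) ^ (e1 z)) +
         sv * (V:ℂ) ^ (e2 z) * (sa * (A:ℂ) ^ (e1 z) - sb * (B:ℂ) ^ (e1 z))‖ := by
      simp only [hF]
      rw [norm_mul, norm_mul, norm_inv, norm_cpow_real hSpos]
      norm_num
    rw [hFn]
    have step : ‖su * (U:ℂ) ^ (e2 z) * (sa * (A:ℂ) ^ (e1 z) + sb * (B:ℂ) ^ (e1 z)) +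
         sv * (V:ℂ) ^ (e2 z) * (sa * (A:ℂ) ^ (e1 z) - sb * (B:ℂ) ^ (e1 z))‖
        ≤ U ^ (e2 z).re * (A ^ (e1 z).re + B ^ (e1 z).re)
          + V ^ (e2 z).re * (A ^ (e1 z).re + B ^ (e1 z).re) := by
      refine (norm_add_le _ _).trans (add_le_add ?_ ?_)
      · rw [norm_mul, norm_mul, hsu1, one_mul, norm_cpow_real hUpos]
        exact mul_le_mul_of_nonneg_left hP (Real.rpow_nonneg hUpos.le _)
      · rw [norm_mul, norm_mul, hsv1, one_mul, norm_cpow_real hVpos]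
        exact mul_le_mul_of_nonneg_left hM (Real.rpow_nonneg hVpos.le _)
    calc 2⁻¹ * S ^ (e3 z).re * ‖_‖
        ≤ 2⁻¹ * S ^ (e3 z).re * (U ^ (e2 z).re * (A ^ (e1 z).re + B ^ (e1 z).re)
          + V ^ (e2 z).re * (A ^ (e1 z).re + B ^ (e1 z).re)) := by
          refine mul_le_mul_of_nonneg_left step ?_
          positivity
      _ = 2⁻¹ * S ^ (e3 z).re *
          ((U ^ (e2 z).re + V ^ (e2 z).re) * (A ^ (e1 z).re + B ^ (e1 z).re)) := by ring
  -- boundary at re = 0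
  have bdry0 : ∀ z ∈ Complex.re ⁻¹' {(0:ℝ)}, ‖F z‖ ≤ 1 := by
    intro z hz
    have hz0 : z.re = 0 := hz
    have htri := tri z
    rw [he1re, he2re, he3re, hz0] at htri
    refine htri.trans_eq ?_
    rw [show p - p/2 * 0 = p by ring, show q - q/2 * 0 = q by ring,
      show (1:ℝ)/2 * 0 - 1 = -1 by ring, hnorm, Real.rpow_neg_one,
      show U ^ q + V ^ q = 2 * S by rw [hSdef]; ring]
    field_simp
  -- boundary at re = 1
  have bdry1 : ∀ z ∈ Complex.re ⁻¹' {(1:ℝ)}, ‖F z‖ ≤ 1 := by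
    intro z hz
    have hz1 : z.re = 1 := hz
    set X := sa * (A:ℂ) ^ (e1 z) with hX
    set Y := sb * (B:ℂ) ^ (e1 z) with hY
    have hsqr : ∀ t r : ℝ, 0 < t → t ^ (r/2) * t ^ (r/2) = t ^ r := by
      intro t r ht; rw [← Real.rpow_add ht]; congr 1; ring
    have hXn : ‖X‖ = A ^ (p/2) := by
      rw [hX, norm_mul, hsa1, one_mul, norm_cpow_real hApos, he1re, hz1]
      congr 1; ring
    have hYn : ‖Y‖ = B ^ (p/2) := by
      rw [hY, norm_mul, hsb1, one_mul, norm_cpow_real hBpos, he1re, hz1]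
      congr 1; ring
    have hpar : ‖X + Y‖^2 + ‖X - Y‖^2 = 2 := by
      have hplaw := parallelogram_law_with_norm ℂ X Y
      rw [hXn, hYn, sq (A ^ (p/2)), sq (B ^ (p/2)), hsqr A p hApos, hsqr B p hBpos] at hplaw
      calc ‖X + Y‖^2 + ‖X - Y‖^2 = ‖X+Y‖*‖X+Y‖ + ‖X-Y‖*‖X-Y‖ := by ring
        _ = 2 * (A ^ p + B ^ p) := by rw [← hplaw]; ring
        _ = 2 := by rw [hnorm]; ring
    have hFz : ‖F z‖ = 2⁻¹ * S ^ (-(1:ℝ)/2) *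
        ‖su * (U:ℂ) ^ (e2 z) * (X + Y) + sv * (V:ℂ) ^ (e2 z) * (X - Y)‖ := by
      simp only [hF]
      rw [norm_mul, norm_mul, norm_inv, norm_cpow_real hSpos, he3re, hz1]
      norm_num
      left; rfl
    have hub : ‖su * (U:ℂ) ^ (e2 z) * (X + Y) + sv * (V:ℂ) ^ (e2 z) * (X - Y)‖
        ≤ U ^ (q/2) * ‖X + Y‖ + V ^ (q/2) * ‖X - Y‖ := by
      refine (norm_add_le _ _).trans (add_le_add ?_ ?_)
      · rw [norm_mul, norm_mul, hsu1, one_mul, norm_cpow_real hUpos, he2re, hz1,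
          show q - q/2 * 1 = q/2 by ring]
      · rw [norm_mul, norm_mul, hsv1, one_mul, norm_cpow_real hVpos, he2re, hz1,
          show q - q/2 * 1 = q/2 by ring]
    have hcs : U ^ (q/2) * ‖X + Y‖ + V ^ (q/2) * ‖X - Y‖
        ≤ Real.sqrt (2*S) * Real.sqrt 2 := by
      have h := cs_two (Real.rpow_nonneg hUpos.le (q/2)) (Real.rpow_nonneg hVpos.le (q/2))
        (norm_nonneg (X+Y)) (norm_nonneg (X-Y))
      rw [show (U ^ (q/2))^2 = U ^ q by rw [sq]; exact hsqr U q hUpos,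
        show (V ^ (q/2))^2 = V ^ q by rw [sq]; exact hsqr V q hVpos,
        hpar, show U ^ q + V ^ q = 2 * S by rw [hSdef]; ring] at h
      exact h
    have hfinal : 2⁻¹ * S ^ (-(1:ℝ)/2) * (Real.sqrt (2*S) * Real.sqrt 2) = 1 := by
      rw [Real.sqrt_mul (by norm_num : (0:ℝ) ≤ 2) S, Real.sqrt_eq_rpow S,
        show (-(1:ℝ)/2) = -((1:ℝ)/2) by ring, Real.rpow_neg hSpos.le]
      have h2 : Real.sqrt 2 * Real.sqrt 2 = 2 := Real.mul_self_sqrt (by norm_num)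
      have hS2 : (0:ℝ) < S ^ ((1:ℝ)/2) := Real.rpow_pos_of_pos hSpos _
      calc 2⁻¹ * (S ^ ((1:ℝ)/2))⁻¹ * (Real.sqrt 2 * S ^ ((1:ℝ)/2) * Real.sqrt 2)
          = (Real.sqrt 2 * Real.sqrt 2) * 2⁻¹ * ((S ^ ((1:ℝ)/2))⁻¹ * S ^ ((1:ℝ)/2)) := by ring
        _ = 1 := by rw [h2, inv_mul_cancel₀ hS2.ne']; norm_num
    calc ‖F z‖ = 2⁻¹ * S ^ (-(1:ℝ)/2) *
        ‖su * (U:ℂ) ^ (e2 z) * (X + Y) + sv * (V:ℂ) ^ (e2 z) * (X - Y)‖ := hFz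
      _ ≤ 2⁻¹ * S ^ (-(1:ℝ)/2) * (Real.sqrt (2*S) * Real.sqrt 2) := by
          refine mul_le_mul_of_nonneg_left (hub.trans hcs) ?_
          positivity
      _ = 1 := hfinal
  -- boundedness on the strip
  have hB : BddAbove ((norm ∘ F) '' Complex.HadamardThreeLines.verticalClosedStrip 0 1) := by
    refine ⟨2⁻¹ * max (S ^ (-1:ℝ)) (S ^ (-(1:ℝ)/2)) *
      ((max (U ^ (q/2)) (U ^ q) + max (V ^ (q/2)) (V ^ q)) *
       (max (A ^ (p/2)) (A ^ p) + max (B ^ (p/2)) (B ^ p))), ?_⟩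
    rintro w ⟨z, hz, rfl⟩
    have hzre : z.re ∈ Set.Icc (0:ℝ) 1 := hz
    obtain ⟨hz0, hz1⟩ := hzre
    have b1A : A ^ (e1 z).re ≤ max (A ^ (p/2)) (A ^ p) := by
      rw [he1re]; exact rpow_interval_bound hApos (by nlinarith) (by nlinarith)
    have b1B : B ^ (e1 z).re ≤ max (B ^ (p/2)) (B ^ p) := by
      rw [he1re]; exact rpow_interval_bound hBpos (by nlinarith) (by nlinarith)
    have b2U : U ^ (e2 z).re ≤ max (U ^ (q/2)) (U ^ q) := by
      rw [he2re]; exact rpow_interval_bound hUpos (by nlinarith) (by nlinarith)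
    have b2V : V ^ (e2 z).re ≤ max (V ^ (q/2)) (V ^ q) := by
      rw [he2re]; exact rpow_interval_bound hVpos (by nlinarith) (by nlinarith)
    have b3S : S ^ (e3 z).re ≤ max (S ^ (-1:ℝ)) (S ^ (-(1:ℝ)/2)) := by
      rw [he3re]; exact rpow_interval_bound hSpos (by nlinarith) (by nlinarith)
    refine (tri z).trans ?_
    have h1 : (0:ℝ) ≤ U ^ (e2 z).re := Real.rpow_nonneg hUpos.le _
    have h2 : (0:ℝ) ≤ V ^ (e2 z).re := Real.rpow_nonneg hVpos.le _
    have h3 : (0:ℝ) ≤ A ^ (e1 z).re := Real.rpow_nonneg hApos.le _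
    have h4 : (0:ℝ) ≤ B ^ (e1 z).re := Real.rpow_nonneg hBpos.le _
    have nU : (0:ℝ) ≤ max (U ^ (q/2)) (U ^ q) :=
      le_trans (Real.rpow_nonneg hUpos.le _) (le_max_left _ _)
    have nV : (0:ℝ) ≤ max (V ^ (q/2)) (V ^ q) :=
      le_trans (Real.rpow_nonneg hVpos.le _) (le_max_left _ _)
    have nA : (0:ℝ) ≤ max (A ^ (p/2)) (A ^ p) :=
      le_trans (Real.rpow_nonneg hApos.le _) (le_max_left _ _)
    have nB : (0:ℝ) ≤ max (B ^ (p/2)) (B ^ p) :=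
      le_trans (Real.rpow_nonneg hBpos.le _) (le_max_left _ _)
    have nS : (0:ℝ) ≤ max (S ^ (-1:ℝ)) (S ^ (-(1:ℝ)/2)) :=
      le_trans (Real.rpow_nonneg hSpos.le _) (le_max_left _ _)
    have einner : (U ^ (e2 z).re + V ^ (e2 z).re) * (A ^ (e1 z).re + B ^ (e1 z).re)
        ≤ (max (U ^ (q/2)) (U ^ q) + max (V ^ (q/2)) (V ^ q)) *
          (max (A ^ (p/2)) (A ^ p) + max (B ^ (p/2)) (B ^ p)) :=
      mul_le_mul (add_le_add b2U b2V) (add_le_add b1A b1B)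
        (add_nonneg h3 h4) (add_nonneg nU nV)
    have eouter : 2⁻¹ * S ^ (e3 z).re ≤ 2⁻¹ * max (S ^ (-1:ℝ)) (S ^ (-(1:ℝ)/2)) :=
      mul_le_mul_of_nonneg_left b3S (by norm_num)
    exact mul_le_mul eouter einner
      (mul_nonneg (mul_nonneg h1 h3 |> fun _ => mul_nonneg (add_nonneg h1 h2) (add_nonneg h3 h4)) (le_refl 0 |> fun _ => le_refl 0) |> fun _ => mul_nonneg (add_nonneg h1 h2) (add_nonneg h3 h4))
      (mul_nonneg (by norm_num) nS)
  -- apply the three-lines theorem at θ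
  set θ : ℝ := 2 - 2/p with hθd
  have hθ0 : (0:ℝ) ≤ θ := by
    rw [hθd]; rw [sub_nonneg, div_le_iff₀ hp0]; nlinarith
  have hθ1 : θ ≤ 1 := by
    rw [hθd, sub_le_iff_le_add]
    rw [show (1:ℝ) + 2/p = (p + 2)/p by field_simp]
    rw [le_div_iff₀ hp0]; nlinarith
  have hθmem : (θ:ℂ) ∈ Complex.HadamardThreeLines.verticalClosedStrip 0 1 := by
    show (θ:ℂ).re ∈ Set.Icc (0:ℝ) 1
    rw [Complex.ofReal_re]
    exact ⟨hθ0, hθ1⟩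
  have h3l := Complex.HadamardThreeLines.norm_le_interp_of_mem_verticalClosedStrip'
    (f := F) (by norm_num) hθmem hd hB bdry0 bdry1
  rw [Real.one_rpow, Real.one_rpow, mul_one] at h3l
  -- compute F θ
  have hpC : (p:ℂ) ≠ 0 := by exact_mod_cast hp0.ne'
  have he1θ : e1 (θ:ℂ) = 1 := by
    simp only [he1, hθd]
    push_cast
    field_simp
    ring
  have he2θ : e2 (θ:ℂ) = ((q - 1 : ℝ):ℂ) := by
    have hre : q - q/2 * (2 - 2/p) = q - 1 := by
      rw [← hqp]; field_simp; ring
    simp only [he2, hθd]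
    rw [show ((q:ℂ) - ((q/2:ℝ):ℂ) * ((2 - 2/p : ℝ):ℂ)) = ((q - q/2 * (2 - 2/p) : ℝ):ℂ) by
      push_cast; ring]
    rw [hre]
  have he3θ : e3 (θ:ℂ) = ((-(1:ℝ)/p : ℝ):ℂ) := by
    have hre : (1:ℝ)/2 * (2 - 2/p) - 1 = -(1:ℝ)/p := by field_simp; ring
    simp only [he3, hθd]
    rw [show ((((1:ℝ)/2 : ℝ):ℂ) * ((2 - 2/p : ℝ):ℂ) - 1) = (((1:ℝ)/2 * (2 - 2/p) - 1 : ℝ):ℂ) by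
      push_cast; ring]
    rw [hre]
  have hsaA : sa * (A:ℂ) ^ (e1 (θ:ℂ)) = (a:ℂ) := by
    rw [he1θ, Complex.cpow_one, hsad, ← Complex.ofReal_mul, div_mul_cancel₀ a hApos.ne']
  have hsbB : sb * (B:ℂ) ^ (e1 (θ:ℂ)) = (b:ℂ) := by
    rw [he1θ, Complex.cpow_one, hsbd, ← Complex.ofReal_mul, div_mul_cancel₀ b hBpos.ne']
  have hUterm : su * (U:ℂ) ^ (e2 (θ:ℂ)) * ((a:ℂ) + (b:ℂ)) = ((U ^ q : ℝ):ℂ) := by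
    rw [he2θ, ← Complex.ofReal_cpow hUpos.le, hsud]
    rw [show ((a:ℂ) + (b:ℂ)) = ((a + b : ℝ):ℂ) by push_cast; ring]
    rw [← Complex.ofReal_mul, ← Complex.ofReal_mul]
    congr 1
    have habs : (a+b) * (a+b) = U * U := (abs_mul_abs_self (a+b)).symm
    calc (a+b)/U * U ^ (q-1) * (a+b) = ((a+b) * (a+b)) * U ^ (q-1) / U := by ring
      _ = (U * U) * U ^ (q-1) / U := by rw [habs]
      _ = U * U ^ (q-1) := by field_simp
      _ = U ^ q := by
          nth_rewrite 1 [← Real.rpow_one U]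
          rw [← Real.rpow_add hUpos]
          congr 1; ring
  have hVterm : sv * (V:ℂ) ^ (e2 (θ:ℂ)) * ((a:ℂ) - (b:ℂ)) = ((V ^ q : ℝ):ℂ) := by
    rw [he2θ, ← Complex.ofReal_cpow hVpos.le, hsvd]
    rw [show ((a:ℂ) - (b:ℂ)) = ((a - b : ℝ):ℂ) by push_cast; ring]
    rw [← Complex.ofReal_mul, ← Complex.ofReal_mul]
    congr 1
    have habs : (a-b) * (a-b) = V * V := (abs_mul_abs_self (a-b)).symm
    calc (a-b)/V * V ^ (q-1) * (a-b) = ((a-b) * (a-b)) * V ^ (q-1) / V := by ring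
      _ = (V * V) * V ^ (q-1) / V := by rw [habs]
      _ = V * V ^ (q-1) := by field_simp
      _ = V ^ q := by
          nth_rewrite 1 [← Real.rpow_one V]
          rw [← Real.rpow_add hVpos]
          congr 1; ring
  have hFθ : F (θ:ℂ) = ((S ^ ((1:ℝ)/q) : ℝ):ℂ) := by
    simp only [hF]
    rw [show (su * (U:ℂ) ^ (e2 (θ:ℂ)) * (sa * (A:ℂ) ^ (e1 (θ:ℂ)) + sb * (B:ℂ) ^ (e1 (θ:ℂ))) +
       sv * (V:ℂ) ^ (e2 (θ:ℂ)) * (sa * (A:ℂ) ^ (e1 (θ:ℂ)) - sb * (B:ℂ) ^ (e1 (θ:ℂ)))) =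
       (su * (U:ℂ) ^ (e2 (θ:ℂ)) * ((a:ℂ) + (b:ℂ)) +
        sv * (V:ℂ) ^ (e2 (θ:ℂ)) * ((a:ℂ) - (b:ℂ))) by rw [hsaA, hsbB]]
    rw [hUterm, hVterm, he3θ, ← Complex.ofReal_cpow hSpos.le]
    rw [show ((2:ℂ)⁻¹ : ℂ) = (((2:ℝ)⁻¹ : ℝ):ℂ) by push_cast; ring]
    rw [← Complex.ofReal_add, ← Complex.ofReal_mul, ← Complex.ofReal_mul]
    congr 1
    rw [show U ^ q + V ^ q = 2 * S by rw [hSdef]; ring]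
    rw [show (2:ℝ)⁻¹ * S ^ (-(1:ℝ)/p) * (2 * S) = S ^ (-(1:ℝ)/p) * S by ring]
    nth_rewrite 2 [← Real.rpow_one S]
    rw [← Real.rpow_add hSpos]
    congr 1
    have : (1:ℝ)/q = 1 - 1/p := by linarith
    rw [this]; ring
  have hnormθ : ‖F (θ:ℂ)‖ = S ^ ((1:ℝ)/q) := by
    rw [hFθ, Complex.norm_real, Real.norm_eq_abs,
      abs_of_pos (Real.rpow_pos_of_pos hSpos _)]
  rw [hnormθ] at h3l
  -- conclude S ≤ 1
  calc S = (S ^ ((1:ℝ)/q)) ^ q := by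
        rw [← Real.rpow_mul hSpos.le, one_div_mul_cancel hq0.ne', Real.rpow_one]
    _ ≤ 1 ^ q := Real.rpow_le_rpow (Real.rpow_nonneg hSpos.le _) h3l hq0.le
    _ = 1 := Real.one_rpow q

end

lemma scalarB {p q : ℝ} (hp : 1 < p) (hp2 : p ≤ 2) (hq : q = p / (p - 1)) (a b : ℝ) :
    |a + b| ^ q + |a - b| ^ q ≤ 2 * (|a| ^ p + |b| ^ p) ^ (q - 1) := by
  have hp0 : (0:ℝ) < p := by linarith
  have hp1 : (0:ℝ) < p - 1 := by linarith
  have hq2 : 2 ≤ q := by rw [hq, le_div_iff₀ hp1]; nlinarith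
  have hq0 : (0:ℝ) < q := by linarith
  have hqp : q / p = q - 1 := by rw [hq]; field_simp; ring
  have hpq1 : p * (q - 1) = q := by
    rw [← hqp]; field_simp
  -- helper for equality cases
  have habs_q : ∀ t : ℝ, (|t| ^ p) ^ (q - 1) = |t| ^ q := by
    intro t
    rw [← Real.rpow_mul (abs_nonneg t), hpq1]
  rcases eq_or_ne a 0 with rfl | ha
  · rw [zero_add, zero_sub, abs_neg, abs_zero, Real.zero_rpow hp0.ne', zero_add, habs_q]
    nlinarith [Real.rpow_nonneg (abs_nonneg b) q]
  rcases eq_or_ne b 0 with rfl | hb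
  · rw [add_zero, sub_zero, abs_zero, Real.zero_rpow hp0.ne', add_zero, habs_q]
    nlinarith [Real.rpow_nonneg (abs_nonneg a) q]
  rcases eq_or_ne (a + b) 0 with hab | hu
  · -- b = -a
    have hba : b = -a := by linarith
    subst hba
    rw [show a - -a = 2*a by ring, abs_neg, hab, abs_zero, Real.zero_rpow hq0.ne', zero_add,
      abs_mul, show |(2:ℝ)| = 2 by norm_num,
      Real.mul_rpow (by norm_num) (abs_nonneg a),
      show |a| ^ p + |a| ^ p = 2 * |a| ^ p by ring,
      Real.mul_rpow (by norm_num) (Real.rpow_nonneg (abs_nonneg a) p), habs_q]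
    have h2 : (2:ℝ) ^ q = 2 * 2 ^ (q-1) := by
      nth_rewrite 1 [show q = 1 + (q - 1) by ring]
      rw [Real.rpow_add (by norm_num), Real.rpow_one]
    rw [h2]; apply le_of_eq; ring
  rcases eq_or_ne (a - b) 0 with hab | hv
  · have hba : a = b := by linarith
    subst hba
    rw [show a + a = 2*a by ring, hab, abs_zero, Real.zero_rpow hq0.ne',
      abs_mul, show |(2:ℝ)| = 2 by norm_num,
      Real.mul_rpow (by norm_num) (abs_nonneg a),
      show |a| ^ p + |a| ^ p = 2 * |a| ^ p by ring,
      Real.mul_rpow (by norm_num) (Real.rpow_nonneg (abs_nonneg a) p), habs_q]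
    have h2 : (2:ℝ) ^ q = 2 * 2 ^ (q-1) := by
      nth_rewrite 1 [show q = 1 + (q - 1) by ring]
      rw [Real.rpow_add (by norm_num), Real.rpow_one]
    rw [h2]; apply le_of_eq; ring
  -- main case : scale
  have hsumpos : (0:ℝ) < |a| ^ p + |b| ^ p := by
    have := Real.rpow_pos_of_pos (abs_pos.mpr ha) p
    have := Real.rpow_pos_of_pos (abs_pos.mpr hb) p
    linarith
  set c : ℝ := (|a| ^ p + |b| ^ p) ^ ((1:ℝ)/p) with hc
  have hcpos : 0 < c := Real.rpow_pos_of_pos hsumpos _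
  have hcp : c ^ p = |a| ^ p + |b| ^ p := by
    rw [hc, ← Real.rpow_mul hsumpos.le, one_div_mul_cancel hp0.ne', Real.rpow_one]
  have hdivabs : ∀ t : ℝ, |t / c| = |t| / c := by
    intro t; rw [abs_div, abs_of_pos hcpos]
  have hnorm' : |a / c| ^ p + |b / c| ^ p = 1 := by
    rw [hdivabs, hdivabs, Real.div_rpow (abs_nonneg a) hcpos.le,
      Real.div_rpow (abs_nonneg b) hcpos.le, hcp]
    field_simp
  have hcore := scalarB_core hp hp2 hq (div_ne_zero ha hcpos.ne') (div_ne_zero hb hcpos.ne')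
    (by rw [← add_div]; exact div_ne_zero hu hcpos.ne')
    (by rw [div_sub_div_same]; exact div_ne_zero hv hcpos.ne') hnorm'
  rw [← add_div, div_sub_div_same, hdivabs, hdivabs,
    Real.div_rpow (abs_nonneg _) hcpos.le, Real.div_rpow (abs_nonneg _) hcpos.le] at hcore
  have hcq : (0:ℝ) < c ^ q := Real.rpow_pos_of_pos hcpos q
  have hfin : |a + b| ^ q + |a - b| ^ q ≤ 2 * c ^ q := by
    have h := mul_le_mul_of_nonneg_right hcore hcq.le
    calc |a + b| ^ q + |a - b| ^ q
        = (|a + b| ^ q / c ^ q + |a - b| ^ q / c ^ q) * c ^ q := by field_simp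
      _ ≤ 2 * c ^ q := h
  have hcqval : c ^ q = (|a| ^ p + |b| ^ p) ^ (q - 1) := by
    rw [hc, ← Real.rpow_mul hsumpos.le]
    congr 1
    rw [← hqp]; field_simp
  rw [← hcqval]
  exact hfin


/-! ### The `ℓᵖ` estimates -/

lemma rpow_add_le_mul' {u v t : ℝ} (hu : 0 ≤ u) (hv : 0 ≤ v) (ht : 1 ≤ t) :
    (u + v) ^ t ≤ 2 ^ (t - 1) * (u ^ t + v ^ t) := by
  have h := NNReal.rpow_add_le_mul_rpow_add_rpow u.toNNReal v.toNNReal ht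
  have h2 := NNReal.coe_le_coe.2 h
  push_cast [NNReal.coe_rpow] at h2
  rwa [Real.coe_toNNReal u hu, Real.coe_toNNReal v hv] at h2

section lp
variable {p q : ℝ} [Fact ((1 : ℝ≥0∞) ≤ ENNReal.ofReal p)]

lemma toReal_ofReal' (hp : 1 < p) : (ENNReal.ofReal p).toReal = p :=
  ENNReal.toReal_ofReal (by linarith)

lemma norm_rpow (hp : 1 < p) (x : lp (fun _ : ℕ => ℝ) (ENNReal.ofReal p)) :
    ‖x‖ ^ p = ∑' i, |x i| ^ p := by
  have h0 : 0 < (ENNReal.ofReal p).toReal := by rw [toReal_ofReal' hp]; linarith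
  have := lp.norm_rpow_eq_tsum h0 x
  rw [toReal_ofReal' hp] at this
  simpa [Real.norm_eq_abs] using this

lemma summable_rpow (hp : 1 < p) (x : lp (fun _ : ℕ => ℝ) (ENNReal.ofReal p)) :
    Summable fun i => |x i| ^ p := by
  have h0 : 0 < (ENNReal.ofReal p).toReal := by rw [toReal_ofReal' hp]; linarith
  have := (lp.memℓp x).summable h0
  rw [toReal_ofReal' hp] at this
  simpa [Real.norm_eq_abs] using this

lemma upper_boundB (hp : 1 < p) (hp2 : p < 2) (hq : q = p / (p - 1))
    (x y : lp (fun _ : ℕ => ℝ) (ENNReal.ofReal p)) :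
    ‖x + y‖ ^ q + ‖x - y‖ ^ q ≤ (2:ℝ) ^ (q - 1) * (‖x‖ ^ q + ‖y‖ ^ q) := by
  have hp1 : (0:ℝ) < p - 1 := by linarith
  set s : ℝ := p - 1 with hsdef
  have hs : 0 < s := hp1
  have hs1 : s < 1 := by simp [hsdef]; linarith
  have hqs : q * s = p := by rw [hq, hsdef, div_mul_cancel₀ p (show p - 1 ≠ 0 by linarith)]
  have hq2 : 2 ≤ q := by
    rw [hq, le_div_iff₀ hp1]; nlinarith
  have hq1s : 1 / s = q - 1 := by
    rw [hq, hsdef, div_sub_one (show p - 1 ≠ 0 by linarith)]; ring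
  have hpq1 : p * (q - 1) = q := by
    rw [hq, hsdef, div_sub_one (show p - 1 ≠ 0 by linarith)]; ring
  -- the sequences
  set f : ℕ → ℝ := fun i => |(x + y) i| ^ q with hf
  set g : ℕ → ℝ := fun i => |(x - y) i| ^ q with hg
  have hf0 : ∀ i, 0 ≤ f i := fun i => Real.rpow_nonneg (abs_nonneg _) _
  have hg0 : ∀ i, 0 ≤ g i := fun i => Real.rpow_nonneg (abs_nonneg _) _
  have hfs : ∀ i, f i ^ s = |(x + y) i| ^ p := by
    intro i; rw [hf, ← Real.rpow_mul (abs_nonneg _), hqs]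
  have hgs : ∀ i, g i ^ s = |(x - y) i| ^ p := by
    intro i; rw [hg, ← Real.rpow_mul (abs_nonneg _), hqs]
  have hsumf : Summable fun i => f i ^ s := by
    simpa only [hfs] using summable_rpow hp (x + y)
  have hsumg : Summable fun i => g i ^ s := by
    simpa only [hgs] using summable_rpow hp (x - y)
  have e1 : (∑' i, f i ^ s) ^ (1/s) = ‖x + y‖ ^ q := by
    have : ∑' i, f i ^ s = ‖x + y‖ ^ p := by
      rw [norm_rpow hp]; exact tsum_congr hfs
    rw [this, ← Real.rpow_mul (norm_nonneg _)]
    congr 1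
    rw [hq1s]; linarith [hpq1]
  have e2 : (∑' i, g i ^ s) ^ (1/s) = ‖x - y‖ ^ q := by
    have : ∑' i, g i ^ s = ‖x - y‖ ^ p := by
      rw [norm_rpow hp]; exact tsum_congr hgs
    rw [this, ← Real.rpow_mul (norm_nonneg _)]
    congr 1
    rw [hq1s]; linarith [hpq1]
  have step1 : ‖x + y‖ ^ q + ‖x - y‖ ^ q ≤ (∑' i, (f i + g i) ^ s) ^ (1/s) := by
    rw [← e1, ← e2]
    exact rev_minkowski hs hs1 hf0 hg0 hsumf hsumg
  -- pointwise bound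
  have hxy : ∀ i, (x + y) i = x i + y i := fun i => by rw [lp.coeFn_add]; rfl
  have hxy' : ∀ i, (x - y) i = x i - y i := fun i => by rw [lp.coeFn_sub]; rfl
  have point : ∀ i, (f i + g i) ^ s ≤ 2 ^ s * (|x i| ^ p + |y i| ^ p) := by
    intro i
    have hsc := scalarB hp hp2.le hq (x i) (y i)
    have h1 : f i + g i ≤ 2 * (|x i| ^ p + |y i| ^ p) ^ (q - 1) := by
      simp only [hf, hg, hxy i, hxy' i]; exact hsc
    calc (f i + g i) ^ s ≤ (2 * (|x i| ^ p + |y i| ^ p) ^ (q - 1)) ^ s :=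
          Real.rpow_le_rpow (add_nonneg (hf0 i) (hg0 i)) h1 hs.le
      _ = 2 ^ s * (|x i| ^ p + |y i| ^ p) := by
          rw [Real.mul_rpow (by norm_num) (Real.rpow_nonneg (by positivity) _),
            ← Real.rpow_mul (by positivity)]
          congr 1
          rw [show (q-1) * s = 1 by rw [← hq1s]; field_simp, Real.rpow_one]
  have sx := summable_rpow hp x
  have sy := summable_rpow hp y
  have hrhs_sum : Summable fun i => 2 ^ s * (|x i| ^ p + |y i| ^ p) := (sx.add sy).mul_left _
  have hlhs_sum : Summable fun i => (f i + g i) ^ s :=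
    Summable.of_nonneg_of_le (fun i => Real.rpow_nonneg (add_nonneg (hf0 i) (hg0 i)) _)
      point hrhs_sum
  have step2 : ∑' i, (f i + g i) ^ s ≤ 2 ^ s * (‖x‖ ^ p + ‖y‖ ^ p) := by
    calc ∑' i, (f i + g i) ^ s ≤ ∑' i, 2 ^ s * (|x i| ^ p + |y i| ^ p) :=
          Summable.tsum_le_tsum point hlhs_sum hrhs_sum
      _ = 2 ^ s * (‖x‖ ^ p + ‖y‖ ^ p) := by
          rw [tsum_mul_left, Summable.tsum_add sx sy, norm_rpow hp, norm_rpow hp]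
  have step3 : (∑' i, (f i + g i) ^ s) ^ (1/s) ≤ 2 * (‖x‖ ^ p + ‖y‖ ^ p) ^ (q - 1) := by
    calc (∑' i, (f i + g i) ^ s) ^ (1/s)
        ≤ (2 ^ s * (‖x‖ ^ p + ‖y‖ ^ p)) ^ (1/s) := by
          apply Real.rpow_le_rpow (tsum_nonneg fun i =>
            Real.rpow_nonneg (add_nonneg (hf0 i) (hg0 i)) _) step2 (by positivity)
      _ = 2 * (‖x‖ ^ p + ‖y‖ ^ p) ^ (q - 1) := by
          rw [Real.mul_rpow (by positivity) (by positivity),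
            ← Real.rpow_mul (by norm_num : (0:ℝ) ≤ 2), mul_one_div_cancel hs.ne',
            Real.rpow_one, hq1s]
  have step4 : (‖x‖ ^ p + ‖y‖ ^ p) ^ (q - 1) ≤ 2 ^ (q - 2) * (‖x‖ ^ q + ‖y‖ ^ q) := by
    have h := rpow_add_le_mul' (Real.rpow_nonneg (norm_nonneg x) p)
      (Real.rpow_nonneg (norm_nonneg y) p) (by linarith : 1 ≤ q - 1)
    rw [← Real.rpow_mul (norm_nonneg x), ← Real.rpow_mul (norm_nonneg y), hpq1] at h
    convert h using 3 <;> ring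
  have h2q : (2:ℝ) ^ (q-1) = 2 * 2 ^ (q - 2) := by
    nth_rewrite 1 [show q - 1 = 1 + (q - 2) by ring]
    rw [Real.rpow_add (by norm_num), Real.rpow_one]
  calc ‖x + y‖ ^ q + ‖x - y‖ ^ q
      ≤ (∑' i, (f i + g i) ^ s) ^ (1/s) := step1
    _ ≤ 2 * (‖x‖ ^ p + ‖y‖ ^ p) ^ (q - 1) := step3
    _ ≤ 2 * (2 ^ (q - 2) * (‖x‖ ^ q + ‖y‖ ^ q)) := by linarith [step4]
    _ = 2 ^ (q - 1) * (‖x‖ ^ q + ‖y‖ ^ q) := by rw [h2q]; ring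



lemma upper_boundA (hp : 1 < p) (hp2 : 2 ≤ p)
    (x y : lp (fun _ : ℕ => ℝ) (ENNReal.ofReal p)) :
    ‖x + y‖ ^ p + ‖x - y‖ ^ p ≤ (2:ℝ) ^ (p - 1) * (‖x‖ ^ p + ‖y‖ ^ p) := by
  rw [norm_rpow hp, norm_rpow hp, norm_rpow hp, norm_rpow hp]
  have hxy : ∀ i, (x + y) i = x i + y i := fun i => by
    rw [lp.coeFn_add]; rfl
  have hxy' : ∀ i, (x - y) i = x i - y i := fun i => by
    rw [lp.coeFn_sub]; rfl
  have s1 := summable_rpow hp (x + y)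
  have s2 := summable_rpow hp (x - y)
  have sx := summable_rpow hp x
  have sy := summable_rpow hp y
  rw [← Summable.tsum_add s1 s2, ← Summable.tsum_add sx sy, ← tsum_mul_left]
  refine Summable.tsum_le_tsum (fun i => ?_) (s1.add s2) ((sx.add sy).mul_left _)
  rw [hxy, hxy']
  exact scalarA hp2 (x i) (y i)

lemma lower_of_upper (hp : 1 < p)
    (H : ∀ x y : lp (fun _ : ℕ => ℝ) (ENNReal.ofReal p),
      ‖x + y‖ ^ q + ‖x - y‖ ^ q ≤ (2:ℝ) ^ (q - 1) * (‖x‖ ^ q + ‖y‖ ^ q))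
    (x y : lp (fun _ : ℕ => ℝ) (ENNReal.ofReal p)) :
    2 * (‖x‖ ^ q + ‖y‖ ^ q) ≤ ‖x + y‖ ^ q + ‖x - y‖ ^ q := by
  have h := H (x + y) (x - y)
  have e1 : x + y + (x - y) = (2:ℝ) • x := by
    rw [two_smul]; abel
  have e2 : x + y - (x - y) = (2:ℝ) • y := by
    rw [two_smul]; abel
  have hP0 : (ENNReal.ofReal p) ≠ 0 := by
    simp [ENNReal.ofReal_eq_zero]; linarith
  have n1 : ‖(2:ℝ) • x‖ = 2 * ‖x‖ := by
    rw [lp.norm_const_smul hP0]; simp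
  have n2 : ‖(2:ℝ) • y‖ = 2 * ‖y‖ := by
    rw [lp.norm_const_smul hP0]; simp
  rw [e1, e2, n1, n2] at h
  rw [Real.mul_rpow (by norm_num) (norm_nonneg _),
      Real.mul_rpow (by norm_num) (norm_nonneg _)] at h
  have h2q : (2:ℝ) ^ q = 2 * 2 ^ (q - 1) := by
    nth_rewrite 1 [show q = 1 + (q - 1) by ring]
    rw [Real.rpow_add (by norm_num), Real.rpow_one]
  have h2pos : (0:ℝ) < 2 ^ (q - 1) := Real.rpow_pos_of_pos (by norm_num) _
  rw [h2q] at h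
  refine le_of_mul_le_mul_left ?_ h2pos
  calc (2:ℝ) ^ (q-1) * (2 * (‖x‖ ^ q + ‖y‖ ^ q))
      = 2 * 2 ^ (q-1) * ‖x‖ ^ q + 2 * 2 ^ (q-1) * ‖y‖ ^ q := by ring
    _ ≤ 2 ^ (q-1) * (‖x + y‖ ^ q + ‖x - y‖ ^ q) := h

end lp

theorem clarkson_inequality_one (p : ℝ) (hp : 1 < p)
    (p' r r' : ℝ) (hp' : p' = p / (p - 1)) (hr : r = min p p') (hr' : r' = r / (r - 1)) :
    haveI : Fact ((1 : ℝ≥0∞) ≤ ENNReal.ofReal p) := ⟨ENNReal.one_le_ofReal.mpr hp.le⟩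
    ∀ x y : lp (fun _ : ℕ => ℝ) (ENNReal.ofReal p),
      2 * (‖x‖ ^ r' + ‖y‖ ^ r') ≤ ‖x + y‖ ^ r' + ‖x - y‖ ^ r' ∧
      ‖x + y‖ ^ r' + ‖x - y‖ ^ r' ≤ (2 : ℝ) ^ (r' - 1) * (‖x‖ ^ r' + ‖y‖ ^ r') := by
  haveI : Fact ((1 : ℝ≥0∞) ≤ ENNReal.ofReal p) := ⟨ENNReal.one_le_ofReal.mpr hp.le⟩
  intro x y
  have hp1 : (0:ℝ) < p - 1 := by linarith
  have hupper : ∀ u v : lp (fun _ : ℕ => ℝ) (ENNReal.ofReal p),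
      ‖u + v‖ ^ r' + ‖u - v‖ ^ r' ≤ (2:ℝ) ^ (r' - 1) * (‖u‖ ^ r' + ‖v‖ ^ r') := by
    rcases lt_or_ge p 2 with hle | hge
    · have hpp' : p ≤ p' := by
        rw [hp', le_div_iff₀ hp1]; nlinarith
      have hr'' : r' = p / (p - 1) := by
        rw [hr', hr, min_eq_left hpp']
      exact fun u v => upper_boundB hp hle hr'' u v
    · have hpp' : p' ≤ p := by
        rw [hp', div_le_iff₀ hp1]; nlinarith
      have hrp' : r = p' := by rw [hr, min_eq_right hpp']
      have hr'' : r' = p := by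
        rw [hr', hrp', hp']
        have h1 : p / (p - 1) - 1 = 1 / (p - 1) := by field_simp; ring
        rw [h1]
        field_simp
      exact fun u v => hr'' ▸ upper_boundA hp hge u v
  exact ⟨lower_of_upper hp hupper x y, hupper x y⟩
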